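/- Let M ∈ ℚ[[t]] be the formal power series M = 1 + ∑_{n≥1} m_n t^n where m_n = 3·2^{n-1}·C(2n,n)/((n+1)(n+2)) for n ≥ 1 (the number of rooted planar Eulerian maps with n edges). Then 16t²·M² − (8t² + 12t − 1)·M + (t² + 11t − 1) = 0 in ℚ[[t]]. -/

import Mathlib

open PowerSeries Finset

private noncomputable def Gcat : PowerSeries ℚ :=
  PowerSeries.mk (fun n => (catalan n : ℚ) * 2 ^ n)

private lemma Gcat_eq : Gcat = 1 + 2 * X * Gcat ^ 2 := by
  ext n
  cases n with
  | zero => simp [Gcat]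
  | succ n =>
    have : (coeff (n+1)) (2 * X * Gcat ^ 2) = 2 * coeff n (Gcat ^ 2) := by
      rw [mul_assoc, ← map_ofNat (C (R := ℚ)) 2, coeff_C_mul, coeff_succ_X_mul]
    rw [map_add, this, sq, coeff_mul]
    have hs : ∑ p ∈ antidiagonal n, coeff p.1 Gcat * coeff p.2 Gcat
        = 2 ^ n * (catalan (n+1) : ℚ) := by
      rw [catalan_succ']
      push_cast
      rw [Finset.mul_sum]
      refine Finset.sum_congr rfl fun p hp => ?_
      have hpe : p.1 + p.2 = n := Finset.HasAntidiagonal.mem_antidiagonal.mp hp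
      simp only [Gcat, coeff_mk]
      rw [← hpe, pow_add]
      ring
    rw [hs]
    simp [Gcat, coeff_one]
    ring

theorem eulerian_maps_gf_algebraic (M : PowerSeries ℚ)
    (h0 : PowerSeries.coeff 0 M = 1)
    (h : ∀ n : ℕ, 1 ≤ n → PowerSeries.coeff n M =
      (3 * 2 ^ (n - 1) * (Nat.choose (2 * n) n : ℚ)) / (((n : ℚ) + 1) * ((n : ℚ) + 2))) :
    16 * X ^ 2 * M ^ 2 - (8 * X ^ 2 + 12 * X - 1) * M + (X ^ 2 + 11 * X - 1) = 0 := by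
  -- coefficients of M in terms of Catalan numbers
  have hm : ∀ n : ℕ, 1 ≤ n → coeff n M =
      2 ^ n * (catalan n : ℚ) - 2 ^ n / 4 * (catalan (n+1) : ℚ) := by
    intro n hn
    rw [h n hn]
    have h1 : ((n : ℚ) + 1) * (catalan n : ℚ) = ((2*n).choose n : ℚ) := by
      have := congrArg (Nat.cast : ℕ → ℚ) (succ_mul_catalan_eq_centralBinom n)
      rw [Nat.centralBinom] at this
      push_cast at this
      linarith
    have h2 : ((n : ℚ) + 2) * (catalan (n+1) : ℚ) = ((2*(n+1)).choose (n+1) : ℚ) := by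
      have := congrArg (Nat.cast : ℕ → ℚ) (succ_mul_catalan_eq_centralBinom (n+1))
      simp only [Nat.centralBinom_eq_two_mul_choose] at this
      push_cast at this ⊢
      linarith
    have h3 : ((n : ℚ) + 1) * ((2*(n+1)).choose (n+1) : ℚ) = 2 * (2*(n:ℚ) + 1) * ((2*n).choose n : ℚ) := by
      have := congrArg (Nat.cast : ℕ → ℚ) (Nat.succ_mul_centralBinom_succ n)
      simp only [Nat.centralBinom_eq_two_mul_choose] at this
      push_cast at this ⊢
      linarith
    have hpow : (2 : ℚ) ^ (n - 1) * 2 = 2 ^ n := by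
      obtain ⟨m, rfl⟩ := Nat.exists_eq_add_of_le hn
      rw [Nat.add_comm 1 m, Nat.add_sub_cancel, pow_succ]
    have hne : ((n : ℚ) + 1) * ((n : ℚ) + 2) ≠ 0 := by positivity
    rw [div_eq_iff hne]
    linear_combination (-(2:ℚ)^n*((n:ℚ)+2))*h1 + ((2:ℚ)^n/4*((n:ℚ)+1))*h2 + ((2:ℚ)^n/4)*h3
      + (3/2*(((2*n).choose n : ℕ) : ℚ))*hpow
  -- relation between Gcat and M
  have hG : (8 * X - 1) * Gcat = 8 * X * M - 2 * X - 1 := by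
    ext n
    have lhs_eq : ∀ k : ℕ, coeff k ((8 * X - 1) * Gcat)
        = 8 * (coeff k (X * Gcat)) - coeff k Gcat := by
      intro k
      have e : (8 * X - 1) * Gcat = 8 * (X * Gcat) - Gcat := by ring
      rw [e, map_sub, ← map_ofNat (C (R := ℚ)) 8, coeff_C_mul]
    cases n with
    | zero =>
      simp [lhs_eq, Gcat, h0]
    | succ n =>
      rw [lhs_eq, coeff_succ_X_mul]
      have rhs : coeff (n+1) (8 * X * M - 2 * X - 1)
          = 8 * coeff n M - 2 * (if n + 1 = 1 then 1 else 0) := by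
        rw [map_sub, map_sub, mul_assoc, ← map_ofNat (C (R := ℚ)) 8, ← map_ofNat (C (R := ℚ)) 2,
          coeff_C_mul, coeff_C_mul, coeff_succ_X_mul, coeff_X, coeff_one]
        simp
      rw [rhs]
      cases n with
      | zero => simp [Gcat, h0]
      | succ n =>
        have hmn := hm (n+1) (Nat.le_add_left 1 n)
        rw [hmn]
        simp only [Gcat, coeff_mk]
        have hne1 : (n + 1 + 1 : ℕ) ≠ 1 := by omega
        rw [if_neg hne1]
        ring
  -- the algebra
  have key : (8 * X - 1) * (8 * X * M - 2 * X - 1)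
      = (8 * X - 1)^2 + 2 * X * (8 * X * M - 2 * X - 1)^2 := by
    calc (8 * X - 1) * (8 * X * M - 2 * X - 1)
        = (8 * X - 1) * ((8 * X - 1) * Gcat) := by rw [hG]
      _ = (8 * X - 1)^2 * Gcat := by ring
      _ = (8 * X - 1)^2 * (1 + 2 * X * Gcat ^ 2) := by rw [← Gcat_eq]
      _ = (8 * X - 1)^2 + 2 * X * ((8 * X - 1) * Gcat)^2 := by ring
      _ = _ := by rw [hG]
  have main : (8 * X : ℚ⟦X⟧) * (16 * X ^ 2 * M ^ 2 - (8 * X ^ 2 + 12 * X - 1) * M + (X ^ 2 + 11 * X - 1)) = 0 := by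
    linear_combination (-(1 : ℚ⟦X⟧)) * key
  have hXne : (8 * X : ℚ⟦X⟧) ≠ 0 := by
    intro hc
    have h1 := congrArg (coeff 1) hc
    rw [← map_ofNat (C (R := ℚ)) 8, coeff_C_mul] at h1
    simp at h1
  rcases mul_eq_zero.mp main with h' | h'
  · exact absurd h' hXne
  · exact h'
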